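/- arXiv:1108.4383 — 4 statements merged into one kernel-verified Lean document; each statement's English description precedes it below -/
import Mathlib

section
/- The n×n permutation matrices span a linear subspace of dimension (n-1)² + 1 in the space of n×n complex matrices. -/
open Matrix Finset

namespace PermSpanAux

variable {m : ℕ}

lemma permMatrix_apply (σ : Equiv.Perm (Fin (m+1))) (i j : Fin (m+1)) :
    σ.permMatrix ℂ i j = if σ i = j then 1 else 0 := by
  rw [Equiv.Perm.permMatrix, PEquiv.toMatrix_apply, Equiv.toPEquiv_apply]
  simp [eq_comm]

lemma permMatrix_row_sum (σ : Equiv.Perm (Fin (m+1))) (i : Fin (m+1)) :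
    ∑ j, σ.permMatrix ℂ i j = 1 := by
  calc ∑ j, σ.permMatrix ℂ i j = ∑ j, if σ i = j then (1:ℂ) else 0 :=
        Finset.sum_congr rfl fun j _ => permMatrix_apply σ i j
    _ = 1 := by rw [Finset.sum_ite_eq]; simp

lemma permMatrix_col_sum (σ : Equiv.Perm (Fin (m+1))) (j : Fin (m+1)) :
    ∑ i, σ.permMatrix ℂ i j = 1 := by
  have : ∀ i : Fin (m+1), σ.permMatrix ℂ i j = if i = σ.symm j then 1 else 0 := by
    intro i
    rw [permMatrix_apply]
    refine if_congr ?_ rfl rfl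
    exact σ.apply_eq_iff_eq_symm_apply
  calc ∑ i, σ.permMatrix ℂ i j = ∑ i, if i = σ.symm j then (1:ℂ) else 0 :=
        Finset.sum_congr rfl fun i _ => this i
    _ = 1 := by rw [Finset.sum_ite_eq']; simp

/-- The common row/column sum property. -/
def rcc (A : Matrix (Fin (m+1)) (Fin (m+1)) ℂ) : Prop :=
  (∀ i, ∑ j, A i j = ∑ j, A 0 j) ∧ (∀ j, ∑ i, A i j = ∑ j, A 0 j)

lemma rcc_of_mem_span {A : Matrix (Fin (m+1)) (Fin (m+1)) ℂ}
    (hA : A ∈ Submodule.span ℂ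
      (Set.range fun σ : Equiv.Perm (Fin (m+1)) => σ.permMatrix ℂ)) : rcc A := by
  induction hA using Submodule.span_induction with
  | mem x hx =>
    obtain ⟨σ, rfl⟩ := hx
    exact ⟨fun i => by rw [permMatrix_row_sum, permMatrix_row_sum],
           fun j => by rw [permMatrix_col_sum, permMatrix_row_sum]⟩
  | zero => exact ⟨fun i => by simp, fun j => by simp⟩
  | add x y hx hy px py =>
    refine ⟨fun i => ?_, fun j => ?_⟩
    · simp only [Matrix.add_apply, Finset.sum_add_distrib, px.1 i, py.1 i]
    · simp only [Matrix.add_apply, Finset.sum_add_distrib, px.2 j, py.2 j]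
  | smul a x hx px =>
    refine ⟨fun i => ?_, fun j => ?_⟩
    · simp only [Matrix.smul_apply, smul_eq_mul, ← Finset.mul_sum, px.1 i]
    · simp only [Matrix.smul_apply, smul_eq_mul, ← Finset.mul_sum, px.2 j]

/-- The "read off the inner block and the first row sum" linear map. -/
noncomputable def fmap (m : ℕ) :
    Matrix (Fin (m+1)) (Fin (m+1)) ℂ →ₗ[ℂ] (Fin m × Fin m → ℂ) × ℂ where
  toFun A := (fun pq => A pq.1.succ pq.2.succ, ∑ j, A 0 j)
  map_add' A B := by
    refine Prod.ext ?_ ?_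
    · funext pq; simp [Matrix.add_apply]
    · simp [Matrix.add_apply, Finset.sum_add_distrib]
  map_smul' c A := by
    refine Prod.ext ?_ ?_
    · funext pq; simp [Matrix.smul_apply]
    · simp [Matrix.smul_apply, Finset.mul_sum]

def dd (i j : Fin (m+1)) : ℂ := if i = j then 1 else 0

def Jmat (m : ℕ) : Matrix (Fin (m+1)) (Fin (m+1)) ℂ := Matrix.of fun _ _ => 1

def Fmat (p q : Fin m) : Matrix (Fin (m+1)) (Fin (m+1)) ℂ :=
  Matrix.of fun i j => (dd i 0 - dd i p.succ) * (dd j 0 - dd j q.succ)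

lemma Jmat_mem :
    Jmat m ∈ Submodule.span ℂ
      (Set.range fun σ : Equiv.Perm (Fin (m+1)) => σ.permMatrix ℂ) := by
  have hJ : Jmat m = ∑ k : Fin (m+1), (Equiv.addLeft k).permMatrix ℂ := by
    ext i j
    rw [Matrix.sum_apply]
    have : ∀ k : Fin (m+1), (Equiv.addLeft k).permMatrix ℂ i j
        = if k = j - i then 1 else 0 := by
      intro k
      rw [permMatrix_apply]
      refine if_congr ?_ rfl rfl
      rw [Equiv.coe_addLeft]
      exact eq_sub_iff_add_eq.symm
    have h2 : ∑ k : Fin (m+1), (Equiv.addLeft k).permMatrix ℂ i j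
        = ∑ k : Fin (m+1), if k = j - i then (1:ℂ) else 0 :=
      Finset.sum_congr rfl fun k _ => this k
    rw [h2, Finset.sum_ite_eq']
    simp [Jmat]
  rw [hJ]
  exact Submodule.sum_mem _ fun k _ => Submodule.subset_span ⟨_, rfl⟩

lemma Fmat_eq (p q : Fin m) :
    Fmat p q = (Equiv.swap p.succ q.succ).permMatrix ℂ
      - Equiv.Perm.permMatrix ℂ ((Equiv.swap p.succ q.succ).trans (Equiv.swap 0 q.succ)) := by
  ext i j
  rw [Matrix.sub_apply, permMatrix_apply, permMatrix_apply, Equiv.trans_apply]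
  have hp0 : p.succ ≠ (0 : Fin (m+1)) := Fin.succ_ne_zero p
  have hq0 : q.succ ≠ (0 : Fin (m+1)) := Fin.succ_ne_zero q
  by_cases hi0 : i = 0
  · subst hi0
    rw [Equiv.swap_apply_of_ne_of_ne (Ne.symm hp0) (Ne.symm hq0),
      Equiv.swap_apply_left]
    simp [Fmat, dd, hp0.symm, eq_comm]
  · by_cases hip : i = p.succ
    · subst hip
      rw [Equiv.swap_apply_left, Equiv.swap_apply_right]
      simp [Fmat, dd, hi0, eq_comm]
    · have hswap : Equiv.swap p.succ q.succ i = i ∨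
          (i = q.succ ∧ Equiv.swap p.succ q.succ i = p.succ) := by
        by_cases hiq : i = q.succ
        · subst hiq; exact Or.inr ⟨rfl, Equiv.swap_apply_right _ _⟩
        · exact Or.inl (Equiv.swap_apply_of_ne_of_ne hip hiq)
      have : Equiv.swap 0 q.succ (Equiv.swap p.succ q.succ i) =
          Equiv.swap p.succ q.succ i := by
        rcases hswap with h | ⟨hiq, h⟩
        · rw [h]
          by_cases hiq : i = q.succ
          · subst hiq
            exfalso
            have := Equiv.swap_apply_right p.succ q.succ
            rw [h] at this
            exact hip this
          · exact Equiv.swap_apply_of_ne_of_ne hi0 hiq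
        · rw [h]
          refine Equiv.swap_apply_of_ne_of_ne hp0 ?_
          intro hpq
          exact hip (hiq.trans hpq.symm)
      rw [this]
      simp [Fmat, dd, hi0, hip]

lemma Fmat_mem (p q : Fin m) :
    Fmat p q ∈ Submodule.span ℂ
      (Set.range fun σ : Equiv.Perm (Fin (m+1)) => σ.permMatrix ℂ) := by
  rw [Fmat_eq]
  exact Submodule.sub_mem _
    (Submodule.subset_span ⟨Equiv.swap p.succ q.succ, rfl⟩)
    (Submodule.subset_span ⟨(Equiv.swap p.succ q.succ).trans (Equiv.swap 0 q.succ), rfl⟩)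

lemma Fmat_inner (p q p' q' : Fin m) :
    Fmat p q p'.succ q'.succ = if p' = p ∧ q' = q then 1 else 0 := by
  have h1 : dd p'.succ (0 : Fin (m+1)) = 0 := if_neg (Fin.succ_ne_zero p')
  have h2 : dd q'.succ (0 : Fin (m+1)) = 0 := if_neg (Fin.succ_ne_zero q')
  have h3 : dd p'.succ p.succ = if p' = p then (1:ℂ) else 0 := by
    simp [dd, Fin.succ_inj]
  have h4 : dd q'.succ q.succ = if q' = q then (1:ℂ) else 0 := by
    simp [dd, Fin.succ_inj]
  simp only [Fmat, Matrix.of_apply, h1, h2, h3, h4, zero_sub, neg_mul_neg]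
  by_cases hp : p' = p <;> by_cases hq : q' = q <;> simp [hp, hq]

lemma Fmat_col_sum (p q : Fin m) (j : Fin (m+1)) :
    ∑ i, Fmat p q i j = 0 := by
  have : ∑ i, (dd i 0 - dd i p.succ) = 0 := by
    rw [Finset.sum_sub_distrib]
    simp [dd]
  simp only [Fmat, Matrix.of_apply, ← Finset.sum_mul, this, zero_mul]

/-- The spanning family for the lower bound. -/
def vfam (m : ℕ) : Option (Fin m × Fin m) → Matrix (Fin (m+1)) (Fin (m+1)) ℂ :=
  fun o => o.elim (Jmat m) fun pq => Fmat pq.1 pq.2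

lemma vfam_indep : LinearIndependent ℂ (vfam m) := by
  rw [Fintype.linearIndependent_iff]
  intro g hg
  have key : ∀ i j : Fin (m+1),
      g none * Jmat m i j + ∑ pq : Fin m × Fin m,
        g (some pq) * Fmat pq.1 pq.2 i j = 0 := by
    intro i j
    have h := congrFun (congrFun hg i) j
    rw [Matrix.sum_apply] at h
    rw [Fintype.sum_option] at h
    simpa [vfam] using h
  have hnone : g none = 0 := by
    have hsum : ∑ i : Fin (m+1), (g none * Jmat m i 0 + ∑ pq : Fin m × Fin m,
        g (some pq) * Fmat pq.1 pq.2 i 0) = 0 := by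
      simp [key]
    rw [Finset.sum_add_distrib, Finset.sum_comm] at hsum
    have h1 : ∑ i : Fin (m+1), g none * Jmat m i 0 = (m+1 : ℂ) * g none := by
      simp [Jmat, Finset.sum_const, mul_comm]
    have h2 : ∑ pq : Fin m × Fin m, ∑ i : Fin (m+1),
        g (some pq) * Fmat pq.1 pq.2 i 0 = 0 := by
      refine Finset.sum_eq_zero fun pq _ => ?_
      rw [← Finset.mul_sum, Fmat_col_sum, mul_zero]
    rw [h1, h2, add_zero] at hsum
    have : (m+1 : ℂ) ≠ 0 := by
      exact_mod_cast m.succ_ne_zero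
    exact (mul_eq_zero.mp hsum).resolve_left this
  intro o
  match o with
  | none => exact hnone
  | some (p, q) =>
    have h := key p.succ q.succ
    rw [hnone, zero_mul, zero_add] at h
    have hs : ∑ pq : Fin m × Fin m, g (some pq) * Fmat pq.1 pq.2 p.succ q.succ
        = g (some (p, q)) := by
      have e1 : Fmat p q p.succ q.succ = 1 := by rw [Fmat_inner]; simp
      refine (Finset.sum_eq_single (p, q) ?_ ?_).trans (by rw [e1, mul_one])
      · intro pq _ hpq
        rw [Fmat_inner, if_neg, mul_zero]
        intro ⟨h1, h2⟩
        exact hpq (Prod.ext h1.symm h2.symm)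
      · intro habs
        exact absurd (Finset.mem_univ _) habs
    rw [hs] at h
    exact h

end PermSpanAux

/-- The `n × n` permutation matrices span a linear subspace of dimension
`(n-1)² + 1` in the space of `n × n` complex matrices. -/
theorem span_perm_matrices_finrank (n : ℕ) (hn : 1 ≤ n) :
    Module.finrank ℂ
        ↥(Submodule.span ℂ (Set.range fun σ : Equiv.Perm (Fin n) => σ.permMatrix ℂ))
      = (n - 1) ^ 2 + 1 := by
  obtain ⟨m, rfl⟩ : ∃ m, n = m + 1 := ⟨n - 1, (Nat.succ_pred_eq_of_pos hn).symm⟩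
  open PermSpanAux in
  set S := Submodule.span ℂ
    (Set.range fun σ : Equiv.Perm (Fin (m+1)) => σ.permMatrix ℂ) with hS
  have hcast : (m + 1 - 1) ^ 2 + 1 = m * m + 1 := by rw [Nat.add_sub_cancel, pow_two]
  rw [hcast]
  apply le_antisymm
  · -- upper bound
    have hker : LinearMap.ker ((fmap m).comp S.subtype) = ⊥ := by
      rw [LinearMap.ker_eq_bot']
      rintro ⟨A, hA⟩ hx
      have hr := rcc_of_mem_span hA
      have hx' : ((fun pq : Fin m × Fin m => A pq.1.succ pq.2.succ, ∑ j, A 0 j) :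
          (Fin m × Fin m → ℂ) × ℂ) = 0 := hx
      have hinner : ∀ p q : Fin m, A p.succ q.succ = 0 := fun p q =>
        congrFun (congrArg Prod.fst hx') (p, q)
      have h0sum : ∑ j, A 0 j = 0 := congrArg Prod.snd hx'
      have hcol0 : ∀ q : Fin m, A 0 q.succ = 0 := by
        intro q
        have h2 := hr.2 q.succ
        rw [h0sum, Fin.sum_univ_succ] at h2
        simpa [hinner] using h2
      have hrow0 : ∀ p : Fin m, A p.succ 0 = 0 := by
        intro p
        have h1 := hr.1 p.succ
        rw [h0sum, Fin.sum_univ_succ] at h1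
        simpa [hinner] using h1
      have h00 : A 0 0 = 0 := by
        have := h0sum
        rw [Fin.sum_univ_succ] at this
        simpa [hcol0] using this
      refine Subtype.ext ?_
      show A = 0
      ext i j
      refine Fin.cases ?_ ?_ i
      · refine Fin.cases ?_ ?_ j
        · simpa using h00
        · intro q; simpa using hcol0 q
      · intro p
        refine Fin.cases ?_ ?_ j
        · simpa using hrow0 p
        · intro q; simpa using hinner p q
    have hinj : Function.Injective ((fmap m).comp S.subtype) :=
      LinearMap.ker_eq_bot.mp hker
    have hle := LinearMap.finrank_le_finrank_of_injective hinj
    have hrk : Module.finrank ℂ ((Fin m × Fin m → ℂ) × ℂ) = m * m + 1 := by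
      rw [Module.finrank_prod, Module.finrank_fintype_fun_eq_card,
        Module.finrank_self, Fintype.card_prod, Fintype.card_fin]
    rwa [hrk] at hle
  · -- lower bound
    have h1 : Module.finrank ℂ
        ↥(Submodule.span ℂ (Set.range (vfam m))) = m * m + 1 := by
      rw [finrank_span_eq_card (vfam_indep (m := m))]
      simp
    have h2 : Submodule.span ℂ (Set.range (vfam m)) ≤ S := by
      rw [Submodule.span_le]
      rintro x ⟨o, rfl⟩
      match o with
      | none => exact Jmat_mem
      | some (p, q) => exact Fmat_mem p q
    calc m * m + 1 = Module.finrank ℂ ↥(Submodule.span ℂ (Set.range (vfam m))) :=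
          h1.symm
      _ ≤ Module.finrank ℂ ↥S := Submodule.finrank_mono h2
end

section
/- If λ and π are distinct partitions of n, λ̄ is a Young tableau of shape λ and π̄ is a Young tableau of shape π, then the product of Young symmetrizers c_{λ̄} · c_{π̄} = 0 in the group algebra C[S_n]. -/
open scoped BigOperators

attribute [local instance] Classical.propDecidable

/-- The row stabilizer of a Young tableau `T` (a bijective filling of the cells of the Young
diagram `Y` by `1, …, n`): permutations of the entries preserving each row. -/
noncomputable def rowStab {n : ℕ} (Y : YoungDiagram) (T : {c // c ∈ Y.cells} ≃ Fin n) :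
    Finset (Equiv.Perm (Fin n)) :=
  Finset.univ.filter fun σ =>
    ∀ x : Fin n, ((T.symm (σ x)) : ℕ × ℕ).1 = ((T.symm x) : ℕ × ℕ).1

/-- The column stabilizer of a Young tableau `T`: permutations of the entries preserving each
column. -/
noncomputable def colStab {n : ℕ} (Y : YoungDiagram) (T : {c // c ∈ Y.cells} ≃ Fin n) :
    Finset (Equiv.Perm (Fin n)) :=
  Finset.univ.filter fun σ =>
    ∀ x : Fin n, ((T.symm (σ x)) : ℕ × ℕ).2 = ((T.symm x) : ℕ × ℕ).2

/-- The Young symmetrizer `c_T = ∑_{p ∈ P_T, q ∈ Q_T} sgn(q) p q` in `ℂ[S_n]`. -/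
noncomputable def youngSymmetrizer {n : ℕ} (Y : YoungDiagram)
    (T : {c // c ∈ Y.cells} ≃ Fin n) : MonoidAlgebra ℂ (Equiv.Perm (Fin n)) :=
  ∑ p ∈ rowStab Y T, ∑ q ∈ colStab Y T,
    MonoidAlgebra.single (p * q) ((Equiv.Perm.sign q : ℤ) : ℂ)

section Aux

variable {n : ℕ}

/-- The "row sum" `a_T = ∑_{p ∈ P_T} p`. -/
noncomputable def rowSum (Y : YoungDiagram) (T : {c // c ∈ Y.cells} ≃ Fin n) :
    MonoidAlgebra ℂ (Equiv.Perm (Fin n)) :=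
  ∑ p ∈ rowStab Y T, MonoidAlgebra.single p 1

/-- The "column sum" `b_T = ∑_{q ∈ Q_T} sgn(q) q`. -/
noncomputable def colSum (Y : YoungDiagram) (T : {c // c ∈ Y.cells} ≃ Fin n) :
    MonoidAlgebra ℂ (Equiv.Perm (Fin n)) :=
  ∑ q ∈ colStab Y T, MonoidAlgebra.single q ((Equiv.Perm.sign q : ℤ) : ℂ)

lemma youngSymmetrizer_eq (Y : YoungDiagram) (T : {c // c ∈ Y.cells} ≃ Fin n) :
    youngSymmetrizer Y T = rowSum Y T * colSum Y T := by
  rw [youngSymmetrizer, rowSum, colSum, Finset.sum_mul]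
  refine Finset.sum_congr rfl fun p _ => ?_
  rw [Finset.mul_sum]
  refine Finset.sum_congr rfl fun q _ => ?_
  rw [MonoidAlgebra.single_mul_single, one_mul]

lemma mem_rowStab {Y : YoungDiagram} {T : {c // c ∈ Y.cells} ≃ Fin n}
    {σ : Equiv.Perm (Fin n)} :
    σ ∈ rowStab Y T ↔ ∀ x : Fin n, ((T.symm (σ x)) : ℕ × ℕ).1 = ((T.symm x) : ℕ × ℕ).1 := by
  simp [rowStab]

lemma mem_colStab {Y : YoungDiagram} {T : {c // c ∈ Y.cells} ≃ Fin n}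
    {σ : Equiv.Perm (Fin n)} :
    σ ∈ colStab Y T ↔ ∀ x : Fin n, ((T.symm (σ x)) : ℕ × ℕ).2 = ((T.symm x) : ℕ × ℕ).2 := by
  simp [colStab]

lemma mul_mem_rowStab {Y : YoungDiagram} {T : {c // c ∈ Y.cells} ≃ Fin n}
    {σ τ : Equiv.Perm (Fin n)} (hσ : σ ∈ rowStab Y T) (hτ : τ ∈ rowStab Y T) :
    σ * τ ∈ rowStab Y T := by
  rw [mem_rowStab] at *
  intro x
  rw [Equiv.Perm.mul_apply, hσ, hτ]

lemma inv_mem_rowStab {Y : YoungDiagram} {T : {c // c ∈ Y.cells} ≃ Fin n}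
    {σ : Equiv.Perm (Fin n)} (hσ : σ ∈ rowStab Y T) : σ⁻¹ ∈ rowStab Y T := by
  rw [mem_rowStab] at *
  intro x
  have h := hσ (σ⁻¹ x)
  rw [show σ (σ⁻¹ x) = x from σ.apply_symm_apply x] at h
  exact h.symm

lemma mul_mem_colStab {Y : YoungDiagram} {T : {c // c ∈ Y.cells} ≃ Fin n}
    {σ τ : Equiv.Perm (Fin n)} (hσ : σ ∈ colStab Y T) (hτ : τ ∈ colStab Y T) :
    σ * τ ∈ colStab Y T := by
  rw [mem_colStab] at *
  intro x
  rw [Equiv.Perm.mul_apply, hσ, hτ]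

lemma inv_mem_colStab {Y : YoungDiagram} {T : {c // c ∈ Y.cells} ≃ Fin n}
    {σ : Equiv.Perm (Fin n)} (hσ : σ ∈ colStab Y T) : σ⁻¹ ∈ colStab Y T := by
  rw [mem_colStab] at *
  intro x
  have h := hσ (σ⁻¹ x)
  rw [show σ (σ⁻¹ x) = x from σ.apply_symm_apply x] at h
  exact h.symm

lemma swap_mem_rowStab {Y : YoungDiagram} {T : {c // c ∈ Y.cells} ≃ Fin n} {x y : Fin n}
    (h : ((T.symm x) : ℕ × ℕ).1 = ((T.symm y) : ℕ × ℕ).1) :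
    Equiv.swap x y ∈ rowStab Y T := by
  rw [mem_rowStab]
  intro z
  rcases eq_or_ne z x with rfl | hzx
  · rw [Equiv.swap_apply_left]; exact h.symm
  rcases eq_or_ne z y with rfl | hzy
  · rw [Equiv.swap_apply_right]; exact h
  · rw [Equiv.swap_apply_of_ne_of_ne hzx hzy]

lemma swap_mem_colStab {Y : YoungDiagram} {T : {c // c ∈ Y.cells} ≃ Fin n} {x y : Fin n}
    (h : ((T.symm x) : ℕ × ℕ).2 = ((T.symm y) : ℕ × ℕ).2) :
    Equiv.swap x y ∈ colStab Y T := by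
  rw [mem_colStab]
  intro z
  rcases eq_or_ne z x with rfl | hzx
  · rw [Equiv.swap_apply_left]; exact h.symm
  rcases eq_or_ne z y with rfl | hzy
  · rw [Equiv.swap_apply_right]; exact h
  · rw [Equiv.swap_apply_of_ne_of_ne hzx hzy]

lemma rowSum_mul_single {Y : YoungDiagram} {T : {c // c ∈ Y.cells} ≃ Fin n}
    {t : Equiv.Perm (Fin n)} (ht : t ∈ rowStab Y T) :
    rowSum Y T * MonoidAlgebra.single t 1 = rowSum Y T := by
  rw [rowSum, Finset.sum_mul]
  simp_rw [MonoidAlgebra.single_mul_single, mul_one]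
  refine Finset.sum_nbij' (fun p => p * t) (fun p => p * t⁻¹) ?_ ?_ ?_ ?_ ?_
  · intro p hp
    exact mul_mem_rowStab hp ht
  · intro p hp
    exact mul_mem_rowStab hp (inv_mem_rowStab ht)
  · intro p _; group
  · intro p _; group
  · intro p _; rfl

lemma single_mul_rowSum {Y : YoungDiagram} {T : {c // c ∈ Y.cells} ≃ Fin n}
    {t : Equiv.Perm (Fin n)} (ht : t ∈ rowStab Y T) :
    MonoidAlgebra.single t 1 * rowSum Y T = rowSum Y T := by
  rw [rowSum, Finset.mul_sum]
  simp_rw [MonoidAlgebra.single_mul_single, one_mul]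
  refine Finset.sum_nbij' (fun p => t * p) (fun p => t⁻¹ * p) ?_ ?_ ?_ ?_ ?_
  · intro p hp
    exact mul_mem_rowStab ht hp
  · intro p hp
    exact mul_mem_rowStab (inv_mem_rowStab ht) hp
  · intro p _; group
  · intro p _; group
  · intro p _; rfl

lemma sign_cast_mul (q t : Equiv.Perm (Fin n)) (hs : Equiv.Perm.sign t = -1) :
    (((Equiv.Perm.sign (q * t) : ℤ) : ℂ)) = -(((Equiv.Perm.sign q : ℤ) : ℂ)) := by
  rw [map_mul, hs]
  push_cast
  ring

lemma sign_cast_mul' (q t : Equiv.Perm (Fin n)) (hs : Equiv.Perm.sign t = -1) :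
    (((Equiv.Perm.sign (t * q) : ℤ) : ℂ)) = -(((Equiv.Perm.sign q : ℤ) : ℂ)) := by
  rw [map_mul, hs]
  push_cast
  ring

lemma single_neg' (q : Equiv.Perm (Fin n)) (c : ℂ) :
    (MonoidAlgebra.single q (-c) : MonoidAlgebra ℂ (Equiv.Perm (Fin n)))
      = -MonoidAlgebra.single q c :=
  MonoidAlgebra.single_neg q c

lemma colSum_mul_single {Y : YoungDiagram} {T : {c // c ∈ Y.cells} ≃ Fin n}
    {t : Equiv.Perm (Fin n)} (ht : t ∈ colStab Y T) (hs : Equiv.Perm.sign t = -1) :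
    colSum Y T * MonoidAlgebra.single t 1 = -(colSum Y T) := by
  rw [colSum, Finset.sum_mul, ← Finset.sum_neg_distrib]
  simp_rw [MonoidAlgebra.single_mul_single, mul_one, ← single_neg']
  refine Finset.sum_nbij' (fun q => q * t) (fun q => q * t⁻¹) ?_ ?_ ?_ ?_ ?_
  · intro q hq
    exact mul_mem_colStab hq ht
  · intro q hq
    exact mul_mem_colStab hq (inv_mem_colStab ht)
  · intro q _; group
  · intro q _; group
  · intro q _
    congr 1
    rw [sign_cast_mul q t hs, neg_neg]

lemma single_mul_colSum {Y : YoungDiagram} {T : {c // c ∈ Y.cells} ≃ Fin n}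
    {t : Equiv.Perm (Fin n)} (ht : t ∈ colStab Y T) (hs : Equiv.Perm.sign t = -1) :
    MonoidAlgebra.single t 1 * colSum Y T = -(colSum Y T) := by
  rw [colSum, Finset.mul_sum, ← Finset.sum_neg_distrib]
  simp_rw [MonoidAlgebra.single_mul_single, one_mul, ← single_neg']
  refine Finset.sum_nbij' (fun q => t * q) (fun q => t⁻¹ * q) ?_ ?_ ?_ ?_ ?_
  · intro q hq
    exact mul_mem_colStab ht hq
  · intro q hq
    exact mul_mem_colStab (inv_mem_colStab ht) hq
  · intro q _; group
  · intro q _; group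
  · intro q _
    congr 1
    rw [sign_cast_mul' q t hs, neg_neg]

lemma self_eq_neg_zero {R : Type*} [AddCommGroup R] [Module ℂ R] {x : R} (h : x = -x) :
    x = 0 := by
  have hxx : x + x = 0 := by
    nth_rewrite 1 [h]
    exact neg_add_cancel x
  have h2 : (2 : ℂ) • x = 0 := by
    rw [two_smul]
    exact hxx
  rcases smul_eq_zero.mp h2 with h' | h'
  · norm_num at h'
  · exact h'

/-- If a transposition lies in both the row stabilizer of `TY` and the column stabilizer of
`TZ`, then `a_{TY} b_{TZ} = 0`. -/
lemma rowSum_mul_colSum_eq_zero {Y Z : YoungDiagram}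
    {TY : {c // c ∈ Y.cells} ≃ Fin n} {TZ : {c // c ∈ Z.cells} ≃ Fin n}
    {x y : Fin n} (hxy : x ≠ y)
    (hr : Equiv.swap x y ∈ rowStab Y TY) (hc : Equiv.swap x y ∈ colStab Z TZ) :
    rowSum Y TY * colSum Z TZ = 0 := by
  set t := Equiv.swap x y with hts
  have hsign : Equiv.Perm.sign t = -1 := Equiv.Perm.sign_swap hxy
  have htt : (MonoidAlgebra.single t 1 : MonoidAlgebra ℂ (Equiv.Perm (Fin n))) *
      MonoidAlgebra.single t 1 = 1 := by
    rw [MonoidAlgebra.single_mul_single, one_mul, hts, Equiv.swap_mul_self,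
      MonoidAlgebra.one_def]
  have key : rowSum Y TY * colSum Z TZ = -(rowSum Y TY * colSum Z TZ) := by
    conv_lhs => rw [← mul_one (rowSum Y TY), ← htt, ← mul_assoc, mul_assoc _ _ (colSum Z TZ),
      rowSum_mul_single hr, single_mul_colSum hc hsign, mul_neg]
  exact self_eq_neg_zero key

/-- If a transposition lies in both the column stabilizer of `TY` and the row stabilizer of
`TZ`, then `b_{TY} a_{TZ} = 0`. -/
lemma colSum_mul_rowSum_eq_zero {Y Z : YoungDiagram}
    {TY : {c // c ∈ Y.cells} ≃ Fin n} {TZ : {c // c ∈ Z.cells} ≃ Fin n}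
    {x y : Fin n} (hxy : x ≠ y)
    (hc : Equiv.swap x y ∈ colStab Y TY) (hr : Equiv.swap x y ∈ rowStab Z TZ) :
    colSum Y TY * rowSum Z TZ = 0 := by
  set t := Equiv.swap x y with hts
  have hsign : Equiv.Perm.sign t = -1 := Equiv.Perm.sign_swap hxy
  have htt : (MonoidAlgebra.single t 1 : MonoidAlgebra ℂ (Equiv.Perm (Fin n))) *
      MonoidAlgebra.single t 1 = 1 := by
    rw [MonoidAlgebra.single_mul_single, one_mul, hts, Equiv.swap_mul_self,
      MonoidAlgebra.one_def]
  have key : colSum Y TY * rowSum Z TZ = -(colSum Y TY * rowSum Z TZ) := by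
    conv_lhs => rw [← mul_one (colSum Y TY), ← htt, ← mul_assoc, mul_assoc _ _ (rowSum Z TZ),
      colSum_mul_single hc hsign, single_mul_rowSum hr, neg_mul]
  exact self_eq_neg_zero key

/-- THE combinatorial lemma: if the first `k` rows of `Y` contain more cells than the first `k`
rows of `Z`, then some two entries lie in the same row of `TY` and the same column of `TZ`. -/
lemma exists_pair_same_row_col {k : ℕ} (Y Z : YoungDiagram)
    (TY : {c // c ∈ Y.cells} ≃ Fin n) (TZ : {c // c ∈ Z.cells} ≃ Fin n)
    (hk : (Z.cells.filter fun c => c.1 < k).card < (Y.cells.filter fun c => c.1 < k).card) :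
    ∃ x y : Fin n, x ≠ y ∧ ((TY.symm x) : ℕ × ℕ).1 = ((TY.symm y) : ℕ × ℕ).1 ∧
      ((TZ.symm x) : ℕ × ℕ).2 = ((TZ.symm y) : ℕ × ℕ).2 := by
  by_contra hcon
  push_neg at hcon
  set rY : Fin n → ℕ := fun x => ((TY.symm x) : ℕ × ℕ).1 with hrYdef
  set cZ : Fin n → ℕ := fun x => ((TZ.symm x) : ℕ × ℕ).2 with hcZdef
  have hcon' : ∀ x y : Fin n, x ≠ y → rY x = rY y → cZ x ≠ cZ y := hcon
  set A : Finset (Fin n) := Finset.univ.filter fun x => rY x < k with hAdef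
  -- |A| = number of cells of Y in the first k rows
  have hAcard : A.card = (Y.cells.filter fun c => c.1 < k).card := by
    refine Finset.card_nbij (fun x => ((TY.symm x) : ℕ × ℕ)) ?_ ?_ ?_
    · intro x hx
      rw [hAdef, Finset.mem_coe, Finset.mem_filter] at hx
      exact Finset.mem_filter.mpr ⟨(TY.symm x).2, hx.2⟩
    · intro x _ y _ hxy
      exact TY.symm.injective (Subtype.coe_injective hxy)
    · intro c hc
      simp only [Finset.coe_filter, Set.mem_setOf_eq] at hc
      obtain ⟨hc1, hc2⟩ := hc
      refine ⟨TY ⟨c, hc1⟩, ?_, by simp⟩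
      simp only [hAdef, Finset.coe_filter, Finset.mem_univ, true_and, Set.mem_setOf_eq, hrYdef]
      simpa using hc2
  -- the injection from A into the first k rows of Z
  set g : Fin n → ℕ × ℕ :=
    fun x => ((A.filter fun y => cZ y = cZ x ∧ rY y < rY x).card, cZ x) with hgdef
  have hgmem : ∀ x ∈ A, g x ∈ Z.cells.filter fun c => c.1 < k := by
    intro x hx
    have hxk : rY x < k := by
      rw [hAdef, Finset.mem_filter] at hx; exact hx.2
    set B : Finset (Fin n) := A.filter fun y => cZ y = cZ x ∧ rY y < rY x with hBdef
    -- first: B.card < k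
    have hBk : B.card ≤ rY x := by
      have : B.card ≤ (Finset.range (rY x)).card := by
        refine Finset.card_le_card_of_injOn rY ?_ ?_
        · intro y hy
          rw [hBdef, Finset.mem_coe, Finset.mem_filter] at hy
          exact Finset.mem_range.mpr hy.2.2
        · intro y hy y' hy' hrr
          by_contra hne
          rw [Finset.mem_coe, hBdef, Finset.mem_filter] at hy hy'
          exact hcon' y y' hne hrr (hy.2.1.trans hy'.2.1.symm)
      simpa using this
    -- second: B.card < colLen of Z at column cZ x
    have hBcol : B.card < Z.colLen (cZ x) := by
      have hxB : x ∉ B := by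
        rw [hBdef, Finset.mem_filter]
        intro h'
        exact absurd h'.2.2 (lt_irrefl _)
      have hcardins : (insert x B).card = B.card + 1 := Finset.card_insert_of_notMem hxB
      have hle : (insert x B).card ≤ (Z.col (cZ x)).card := by
        refine Finset.card_le_card_of_injOn (fun y => ((TZ.symm y) : ℕ × ℕ)) ?_ ?_
        · intro y hy
          rw [Finset.mem_coe, Finset.mem_insert] at hy
          have hcy : cZ y = cZ x := by
            rcases hy with rfl | hy
            · rfl
            · rw [hBdef, Finset.mem_filter] at hy; exact hy.2.1
          rw [YoungDiagram.col, Finset.mem_coe, Finset.mem_filter]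
          exact ⟨(TZ.symm y).2, hcy⟩
        · intro y _ y' _ hyy
          exact TZ.symm.injective (Subtype.coe_injective hyy)
      rw [hcardins, ← YoungDiagram.colLen_eq_card] at hle
      omega
    rw [Finset.mem_filter, hgdef]
    constructor
    · rw [YoungDiagram.mem_cells, YoungDiagram.mem_iff_lt_colLen]
      exact hBcol
    · exact lt_of_le_of_lt hBk hxk
  have hginj : Set.InjOn g A := by
    intro x hx y hy hgxy
    by_contra hne
    rw [Finset.mem_coe] at hx hy
    obtain ⟨hcard, hcc⟩ : ((A.filter fun z => cZ z = cZ x ∧ rY z < rY x).card =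
        (A.filter fun z => cZ z = cZ y ∧ rY z < rY y).card) ∧ cZ x = cZ y :=
      Prod.mk.injEq _ _ _ _ ▸ Prod.ext_iff.mp hgxy
    have hrne : rY x ≠ rY y := by
      intro hr
      exact hcon' x y hne hr hcc
    -- wlog via cases
    rcases lt_or_gt_of_ne hrne with hlt | hgt
    · have hss : (A.filter fun z => cZ z = cZ x ∧ rY z < rY x) ⊂
          (A.filter fun z => cZ z = cZ y ∧ rY z < rY y) := by
        rw [Finset.ssubset_iff_of_subset]
        · exact ⟨x, Finset.mem_filter.mpr ⟨hx, hcc, hlt⟩,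
            fun h => absurd (Finset.mem_filter.mp h).2.2 (lt_irrefl _)⟩
        · intro z hz
          rw [Finset.mem_filter] at hz ⊢
          exact ⟨hz.1, hz.2.1.trans hcc, hz.2.2.trans hlt⟩
      exact absurd hcard (Nat.ne_of_lt (Finset.card_lt_card hss))
    · have hss : (A.filter fun z => cZ z = cZ y ∧ rY z < rY y) ⊂
          (A.filter fun z => cZ z = cZ x ∧ rY z < rY x) := by
        rw [Finset.ssubset_iff_of_subset]
        · exact ⟨y, Finset.mem_filter.mpr ⟨hy, hcc.symm, hgt⟩,
            fun h => absurd (Finset.mem_filter.mp h).2.2 (lt_irrefl _)⟩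
        · intro z hz
          rw [Finset.mem_filter] at hz ⊢
          exact ⟨hz.1, hz.2.1.trans hcc.symm, hz.2.2.trans hgt⟩
      exact absurd hcard.symm (Nat.ne_of_lt (Finset.card_lt_card hss))
  have := Finset.card_le_card_of_injOn g hgmem hginj
  omega

/-- If two Young diagrams have the same number of cells in the first `k` rows for every `k`,
they are equal. -/
lemma eq_of_counts_eq (Y Z : YoungDiagram)
    (h : ∀ k, (Y.cells.filter fun c => c.1 < k).card = (Z.cells.filter fun c => c.1 < k).card) :
    Y = Z := by
  have hstep : ∀ (W : YoungDiagram) (k : ℕ),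
      (W.cells.filter fun c => c.1 < k + 1).card
        = (W.cells.filter fun c => c.1 < k).card + W.rowLen k := by
    intro W k
    rw [W.rowLen_eq_card]
    have hunion : (W.cells.filter fun c => c.1 < k + 1)
        = (W.cells.filter fun c => c.1 < k) ∪ W.row k := by
      ext c
      simp only [Finset.mem_union, Finset.mem_filter, YoungDiagram.row, YoungDiagram.mem_row_iff,
        YoungDiagram.mem_cells]
      constructor
      · rintro ⟨hc, hlt⟩
        rcases Nat.lt_or_ge c.1 k with h' | h'
        · exact Or.inl ⟨hc, h'⟩
        · exact Or.inr ⟨hc, by omega⟩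
      · rintro (⟨hc, hlt⟩ | ⟨hc, heq⟩)
        · exact ⟨hc, by omega⟩
        · exact ⟨hc, by omega⟩
    have hdisj : Disjoint (W.cells.filter fun c => c.1 < k) (W.row k) := by
      rw [Finset.disjoint_left]
      intro c hc hc'
      rw [Finset.mem_filter] at hc
      rw [YoungDiagram.mem_row_iff] at hc'
      omega
    rw [hunion, Finset.card_union_of_disjoint hdisj]
  have hrow : ∀ k, Y.rowLen k = Z.rowLen k := by
    intro k
    have h1 := hstep Y k
    have h2 := hstep Z k
    have h3 := h k
    have h4 := h (k + 1)
    omega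
  ext c
  obtain ⟨i, j⟩ := c
  rw [YoungDiagram.mem_cells, YoungDiagram.mem_cells, YoungDiagram.mem_iff_lt_rowLen,
    YoungDiagram.mem_iff_lt_rowLen, hrow]

/-- Conjugating a tableau by a permutation `g` conjugates the column sum. -/
lemma colSum_trans (Z : YoungDiagram) (TZ : {c // c ∈ Z.cells} ≃ Fin n)
    (g : Equiv.Perm (Fin n)) :
    colSum Z (TZ.trans (g : Equiv.Perm (Fin n))) =
      MonoidAlgebra.single g 1 * colSum Z TZ * MonoidAlgebra.single g⁻¹ 1 := by
  simp only [colSum]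
  rw [Finset.mul_sum, Finset.sum_mul]
  simp_rw [MonoidAlgebra.single_mul_single, one_mul, mul_one]
  refine Finset.sum_nbij' (fun q => g⁻¹ * q * g) (fun q => g * q * g⁻¹) ?_ ?_ ?_ ?_ ?_
  · intro q hq
    rw [mem_colStab] at hq ⊢
    intro x
    have h := hq (g x)
    simpa [Equiv.symm_trans_apply, Equiv.Perm.inv_def, Equiv.Perm.mul_apply] using h
  · intro q hq
    rw [mem_colStab] at hq ⊢
    intro x
    have h := hq (g⁻¹ x)
    simpa [Equiv.symm_trans_apply, Equiv.Perm.inv_def, Equiv.Perm.mul_apply] using h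
  · intro q _; group
  · intro q _; group
  · intro q hq
    have h1 : g * (g⁻¹ * q * g) * g⁻¹ = q := by group
    rw [h1]
    congr 2
    have h2 : Equiv.Perm.sign (g⁻¹ * q * g) = Equiv.Perm.sign q := by
      simp only [map_mul, Equiv.Perm.sign_inv]
      rw [mul_comm (Equiv.Perm.sign g) (Equiv.Perm.sign q), mul_assoc, Int.units_mul_self,
        mul_one]
    rw [h2]

/-- If `a * g * b = 0` for every group element `g` (as a single), then `a * x * b = 0`. -/
lemma mul_middle_eq_zero {a b : MonoidAlgebra ℂ (Equiv.Perm (Fin n))}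
    (h : ∀ g : Equiv.Perm (Fin n), a * MonoidAlgebra.single g 1 * b = 0)
    (x : MonoidAlgebra ℂ (Equiv.Perm (Fin n))) : a * x * b = 0 := by
  induction x using MonoidAlgebra.induction_linear with
  | zero => rw [mul_zero, zero_mul]
  | add f f' hf hf' => rw [mul_add, add_mul, hf, hf', add_zero]
  | single g c =>
  have hsingle : (MonoidAlgebra.single g c : MonoidAlgebra ℂ (Equiv.Perm (Fin n)))
      = c • MonoidAlgebra.single g 1 := by
    rw [MonoidAlgebra.smul_single', mul_one]
  rw [hsingle, mul_smul_comm, smul_mul_assoc, h g, smul_zero]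

end Aux

/-- If `λ` and `π` are distinct partitions of `n` (Young diagrams `Y ≠ Z` with `n`
cells) with tableaux `λ̄ = TY`, `π̄ = TZ`, then `c_{λ̄} · c_{π̄} = 0` in `ℂ[S_n]`. -/
theorem youngSymmetrizer_mul_eq_zero (n : ℕ) (Y Z : YoungDiagram)
    (hY : Y.cells.card = n) (hZ : Z.cells.card = n) (hne : Y ≠ Z)
    (TY : {c // c ∈ Y.cells} ≃ Fin n) (TZ : {c // c ∈ Z.cells} ≃ Fin n) :
    youngSymmetrizer Y TY * youngSymmetrizer Z TZ = 0 := by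
  have hex : ∃ k, (Y.cells.filter fun c => (c : ℕ × ℕ).1 < k).card ≠
      (Z.cells.filter fun c => (c : ℕ × ℕ).1 < k).card := by
    by_contra h
    push_neg at h
    exact hne (eq_of_counts_eq Y Z h)
  obtain ⟨k, hk⟩ := hex
  rw [youngSymmetrizer_eq, youngSymmetrizer_eq]
  rcases lt_or_gt_of_ne hk with h | h
  · -- Z has more cells in the first k rows: b_{TY} a_{TZ} = 0
    obtain ⟨x, y, hxy, hrow, hcol⟩ := exists_pair_same_row_col Z Y TZ TY h
    have h0 : colSum Y TY * rowSum Z TZ = 0 :=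
      colSum_mul_rowSum_eq_zero hxy (swap_mem_colStab hcol) (swap_mem_rowStab hrow)
    calc rowSum Y TY * colSum Y TY * (rowSum Z TZ * colSum Z TZ)
        = rowSum Y TY * (colSum Y TY * rowSum Z TZ) * colSum Z TZ := by
          rw [mul_assoc, mul_assoc, mul_assoc]
      _ = 0 := by rw [h0, mul_zero, zero_mul]
  · -- Y has more cells in the first k rows: a_{TY} g b_{TZ} g⁻¹ = 0 for each g
    have key : ∀ g : Equiv.Perm (Fin n),
        rowSum Y TY * MonoidAlgebra.single g 1 * colSum Z TZ = 0 := by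
      intro g
      obtain ⟨x, y, hxy, hrow, hcol⟩ :=
        exists_pair_same_row_col Y Z TY (TZ.trans (g : Equiv.Perm (Fin n))) h
      have h0 : rowSum Y TY * colSum Z (TZ.trans (g : Equiv.Perm (Fin n))) = 0 :=
        rowSum_mul_colSum_eq_zero hxy (swap_mem_rowStab hrow) (swap_mem_colStab hcol)
      rw [colSum_trans] at h0
      have h1 : rowSum Y TY * (MonoidAlgebra.single g 1 * colSum Z TZ *
          MonoidAlgebra.single g⁻¹ 1) * MonoidAlgebra.single g 1 = 0 := by
        rw [h0, zero_mul]
      have hgg : (MonoidAlgebra.single g⁻¹ 1 : MonoidAlgebra ℂ (Equiv.Perm (Fin n))) *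
          MonoidAlgebra.single g 1 = 1 := by
        rw [MonoidAlgebra.single_mul_single, one_mul, inv_mul_cancel]
        exact MonoidAlgebra.one_def.symm
      have h2 : rowSum Y TY * (MonoidAlgebra.single g 1 * colSum Z TZ *
          MonoidAlgebra.single g⁻¹ 1) * MonoidAlgebra.single g 1
          = rowSum Y TY * MonoidAlgebra.single g 1 * colSum Z TZ := by
        simp only [mul_assoc]
        rw [hgg, mul_one]
      rw [← h2, h1]
    have := mul_middle_eq_zero key (colSum Y TY * rowSum Z TZ)
    calc rowSum Y TY * colSum Y TY * (rowSum Z TZ * colSum Z TZ)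
        = rowSum Y TY * (colSum Y TY * rowSum Z TZ) * colSum Z TZ := by
          rw [mul_assoc, mul_assoc, mul_assoc]
      _ = 0 := this
end

section
/- Consider complex numbers a_{ij} indexed by distinct i,j ∈ {2,3,4,5} satisfying: (i) a_{ij}+a_{jk}+a_{km} = a_{ik}+a_{kj}+a_{jm} whenever {i,j,k,m} = {2,3,4,5}, and (ii) a_{ij}+a_{jk} = a_{ij'}+a_{j'k} whenever {i,j,k,j'} = {2,3,4,5}. Then there exists λ ∈ C such that for every permutation μ of {2,3,4,5} moving exactly ℓ elements, Σ_{i: μ(i)≠i} a_{iμ(i)} = ℓλ. -/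
attribute [local instance] Classical.propDecidable

set_option maxHeartbeats 2000000 in
/-- For complex numbers `a i j` indexed by the four-element set `{2,3,4,5}`
(modelled as `Fin 4`) satisfying
(i) `a i j + a j k + a k m = a i k + a k j + a j m` whenever `{i,j,k,m} = {2,3,4,5}`, and
(ii) `a i j + a j k = a i j' + a j' k` whenever `{i,j,k,j'} = {2,3,4,5}`,
there exists `λ ∈ ℂ` such that for every permutation `μ` of `{2,3,4,5}` moving exactly `ℓ`
elements, `∑_{i : μ i ≠ i} a i (μ i) = ℓ λ`. -/
theorem moved_sum_linear (a : Fin 4 → Fin 4 → ℂ)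
    (h1 : ∀ i j k m : Fin 4, ({i, j, k, m} : Finset (Fin 4)) = Finset.univ →
      a i j + a j k + a k m = a i k + a k j + a j m)
    (h2 : ∀ i j k j' : Fin 4, ({i, j, k, j'} : Finset (Fin 4)) = Finset.univ →
      a i j + a j k = a i j' + a j' k) :
    ∃ lam : ℂ, ∀ μ : Equiv.Perm (Fin 4),
      ∑ i ∈ Finset.univ.filter (fun i => μ i ≠ i), a i (μ i)
        = ((Finset.univ.filter (fun i => μ i ≠ i)).card : ℂ) * lam := by
  refine ⟨(a 0 1 + a 1 0) / 2, fun μ => ?_⟩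
  have hc : ∀ x : Fin 4, x = 0 ∨ x = 1 ∨ x = 2 ∨ x = 3 := by decide
  have e0 := hc (μ 0); have e1 := hc (μ 1); have e2 := hc (μ 2); have e3 := hc (μ 3)
  rcases e0 with h0 | h0 | h0 | h0 <;>
  rcases e1 with hh1 | hh1 | hh1 | hh1 <;>
  rcases e2 with hh2 | hh2 | hh2 | hh2 <;>
  rcases e3 with hh3 | hh3 | hh3 | hh3 <;>
  first
  | exact absurd (μ.injective (h0.trans hh1.symm)) (by decide)
  | exact absurd (μ.injective (h0.trans hh2.symm)) (by decide)
  | exact absurd (μ.injective (h0.trans hh3.symm)) (by decide)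
  | exact absurd (μ.injective (hh1.trans hh2.symm)) (by decide)
  | exact absurd (μ.injective (hh1.trans hh3.symm)) (by decide)
  | exact absurd (μ.injective (hh2.trans hh3.symm)) (by decide)
  | (rw [Finset.sum_filter, Finset.card_filter, Fin.sum_univ_four, Fin.sum_univ_four,
        h0, hh1, hh2, hh3]
     norm_num (config := { decide := true })
     all_goals first
     | ring1
     | linear_combination (-1 : ℂ) * (h2 0 1 3 2 (by decide)) - (1 : ℂ) * (h2 1 0 2 3 (by decide))
     | linear_combination (-1/2 : ℂ) * (h1 0 1 2 3 (by decide)) - (1/2 : ℂ) * (h1 0 1 3 2 (by decide)) - (1/2 : ℂ) * (h1 0 2 3 1 (by decide)) + (h2 0 1 2 3 (by decide)) - (1 : ℂ) * (h2 0 1 3 2 (by decide)) - (1 : ℂ) * (h2 1 0 2 3 (by decide))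
     | linear_combination (-1/4 : ℂ) * (h1 0 1 2 3 (by decide)) - (3/4 : ℂ) * (h1 0 1 3 2 (by decide)) + (1/4 : ℂ) * (h1 0 2 3 1 (by decide)) + (1/2 : ℂ) * (h2 0 1 2 3 (by decide)) - (1 : ℂ) * (h2 0 1 3 2 (by decide)) - (3/2 : ℂ) * (h2 1 0 2 3 (by decide))
     | linear_combination (-3/4 : ℂ) * (h1 0 1 2 3 (by decide)) - (1/4 : ℂ) * (h1 0 1 3 2 (by decide)) - (1/4 : ℂ) * (h1 0 2 3 1 (by decide)) + (1/2 : ℂ) * (h2 0 1 2 3 (by decide)) - (1 : ℂ) * (h2 0 1 3 2 (by decide)) - (3/2 : ℂ) * (h2 1 0 2 3 (by decide))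
     | linear_combination (-1/2 : ℂ) * (h1 0 1 2 3 (by decide)) - (1/2 : ℂ) * (h1 0 1 3 2 (by decide)) + (1/2 : ℂ) * (h1 0 2 3 1 (by decide)) - (1 : ℂ) * (h2 1 0 2 3 (by decide))
     | linear_combination (-1/4 : ℂ) * (h1 0 1 2 3 (by decide)) + (1/4 : ℂ) * (h1 0 1 3 2 (by decide)) + (1/4 : ℂ) * (h1 0 2 3 1 (by decide)) - (1 : ℂ) * (h1 1 0 2 3 (by decide)) + (1/2 : ℂ) * (h2 0 1 2 3 (by decide)) - (1 : ℂ) * (h2 0 1 3 2 (by decide)) - (1/2 : ℂ) * (h2 1 0 2 3 (by decide))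
     | linear_combination (1/2 : ℂ) * (h1 0 1 2 3 (by decide)) - (1/2 : ℂ) * (h1 0 1 3 2 (by decide)) - (1/2 : ℂ) * (h1 0 2 3 1 (by decide)) - (1 : ℂ) * (h1 1 0 3 2 (by decide)) - (1 : ℂ) * (h2 0 1 3 2 (by decide)) - (1 : ℂ) * (h2 1 0 2 3 (by decide))
     | linear_combination (-1/2 : ℂ) * (h1 0 1 2 3 (by decide)) + (1/2 : ℂ) * (h1 0 1 3 2 (by decide)) + (1/2 : ℂ) * (h1 0 2 3 1 (by decide)) - (1 : ℂ) * (h1 1 0 2 3 (by decide)) - (1 : ℂ) * (h2 0 1 3 2 (by decide)) - (1 : ℂ) * (h2 1 0 2 3 (by decide))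
     | linear_combination (1/4 : ℂ) * (h1 0 1 2 3 (by decide)) - (1/4 : ℂ) * (h1 0 1 3 2 (by decide)) - (1/4 : ℂ) * (h1 0 2 3 1 (by decide)) - (1 : ℂ) * (h1 1 0 3 2 (by decide)) - (1/2 : ℂ) * (h2 0 1 2 3 (by decide)) - (1/2 : ℂ) * (h2 1 0 2 3 (by decide))
     | linear_combination (-3/4 : ℂ) * (h1 0 1 2 3 (by decide)) - (1/4 : ℂ) * (h1 0 1 3 2 (by decide)) - (1/4 : ℂ) * (h1 0 2 3 1 (by decide)) + (1/2 : ℂ) * (h2 0 1 2 3 (by decide)) - (1 : ℂ) * (h2 0 1 3 2 (by decide)) - (1/2 : ℂ) * (h2 1 0 2 3 (by decide))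
     | linear_combination (-1/2 : ℂ) * (h1 0 1 2 3 (by decide)) - (1/2 : ℂ) * (h1 0 1 3 2 (by decide)) + (1/2 : ℂ) * (h1 0 2 3 1 (by decide)) - (1 : ℂ) * (h2 0 1 3 2 (by decide)) - (1 : ℂ) * (h2 1 0 2 3 (by decide))
     | linear_combination (-1/2 : ℂ) * (h1 0 1 2 3 (by decide)) + (1/2 : ℂ) * (h1 0 1 3 2 (by decide)) + (1/2 : ℂ) * (h1 0 2 3 1 (by decide)) - (1 : ℂ) * (h1 1 0 2 3 (by decide)) - (1 : ℂ) * (h2 0 1 3 2 (by decide))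
     | linear_combination (1/4 : ℂ) * (h1 0 1 2 3 (by decide)) - (1/4 : ℂ) * (h1 0 1 3 2 (by decide)) - (1/4 : ℂ) * (h1 0 2 3 1 (by decide)) - (1 : ℂ) * (h1 1 0 3 2 (by decide)) - (1/2 : ℂ) * (h2 0 1 2 3 (by decide)) - (1 : ℂ) * (h2 0 1 3 2 (by decide)) - (1/2 : ℂ) * (h2 1 0 2 3 (by decide))
     | linear_combination (-1 : ℂ) * (h1 0 1 2 3 (by decide)) + (h1 0 2 3 1 (by decide)) - (1 : ℂ) * (h1 1 0 2 3 (by decide)) - (1 : ℂ) * (h2 0 1 3 2 (by decide)) - (1 : ℂ) * (h2 1 0 2 3 (by decide))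
     | linear_combination (-1/2 : ℂ) * (h1 0 1 2 3 (by decide)) - (1/2 : ℂ) * (h1 0 1 3 2 (by decide)) - (1/2 : ℂ) * (h1 0 2 3 1 (by decide)) - (1 : ℂ) * (h1 1 0 3 2 (by decide)) - (1 : ℂ) * (h2 0 1 3 2 (by decide)) - (1 : ℂ) * (h2 1 0 2 3 (by decide))
     | linear_combination (-1/2 : ℂ) * (h1 0 1 2 3 (by decide)) - (1/2 : ℂ) * (h1 0 1 3 2 (by decide)) - (1/2 : ℂ) * (h1 0 2 3 1 (by decide)) - (1 : ℂ) * (h2 0 1 3 2 (by decide)) - (1 : ℂ) * (h2 1 0 2 3 (by decide))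
     | linear_combination (-1/4 : ℂ) * (h1 0 1 2 3 (by decide)) - (3/4 : ℂ) * (h1 0 1 3 2 (by decide)) + (1/4 : ℂ) * (h1 0 2 3 1 (by decide)) - (1/2 : ℂ) * (h2 0 1 2 3 (by decide)) - (1/2 : ℂ) * (h2 1 0 2 3 (by decide))
     | linear_combination (-1/4 : ℂ) * (h1 0 1 2 3 (by decide)) + (1/4 : ℂ) * (h1 0 1 3 2 (by decide)) + (1/4 : ℂ) * (h1 0 2 3 1 (by decide)) - (1 : ℂ) * (h1 1 0 2 3 (by decide)) - (1/2 : ℂ) * (h2 0 1 2 3 (by decide)) - (1 : ℂ) * (h2 0 1 3 2 (by decide)) - (1/2 : ℂ) * (h2 1 0 2 3 (by decide))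
     | linear_combination (1/2 : ℂ) * (h1 0 1 2 3 (by decide)) - (1/2 : ℂ) * (h1 0 1 3 2 (by decide)) - (1/2 : ℂ) * (h1 0 2 3 1 (by decide)) - (1 : ℂ) * (h1 1 0 3 2 (by decide)) - (1 : ℂ) * (h2 0 1 2 3 (by decide))
     | linear_combination (-1/2 : ℂ) * (h1 0 1 2 3 (by decide)) - (1/2 : ℂ) * (h1 0 1 3 2 (by decide)) + (1/2 : ℂ) * (h1 0 2 3 1 (by decide)) - (1 : ℂ) * (h1 1 0 2 3 (by decide)) - (1 : ℂ) * (h2 0 1 3 2 (by decide)) - (1 : ℂ) * (h2 1 0 2 3 (by decide))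
     | linear_combination (-1 : ℂ) * (h1 0 1 3 2 (by decide)) - (1 : ℂ) * (h1 0 2 3 1 (by decide)) - (1 : ℂ) * (h1 1 0 3 2 (by decide)) - (1 : ℂ) * (h2 0 1 3 2 (by decide)) - (1 : ℂ) * (h2 1 0 2 3 (by decide))
     )
end

section
/- Let π ⊢ n and suppose (τ₁, τ₂, (c_σ)_{σ∈S_n}) acts on the monomial Π_i x_{iσ(i)} by sending it to c_σ Π_i x_{τ₁(i) τ₂σ(i)}. If this action fixes the immanant P_π, then c_{τ₂^{-1}τ₁σ} χ_π(τ₂^{-1}τ₁σ) = χ_π(σ) for all σ ∈ S_n. -/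
open scoped BigOperators

open MvPolynomial Finsupp in
private lemma prod_X_perm_eq_monomial (n : ℕ) (ρ : Equiv.Perm (Fin n)) :
    (∏ i, MvPolynomial.X (R := ℂ) ((i, ρ i) : Fin n × Fin n))
      = MvPolynomial.monomial (∑ i, Finsupp.single ((i, ρ i) : Fin n × Fin n) 1) (1 : ℂ) := by
  classical
  rw [MvPolynomial.monomial_sum_one]
  simp only [MvPolynomial.X]

open MvPolynomial Finsupp in
private lemma d_inj (n : ℕ) (ρ σ : Equiv.Perm (Fin n))
    (h : (∑ i, Finsupp.single ((i, ρ i) : Fin n × Fin n) (1 : ℕ))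
        = ∑ i, Finsupp.single ((i, σ i) : Fin n × Fin n) 1) : ρ = σ := by
  classical
  ext i
  have := congrFun (congrArg DFunLike.coe h) (i, σ i)
  simp only [Finsupp.finset_sum_apply, Finsupp.single_apply, Prod.mk.injEq] at this
  by_contra hne
  have hl : (∑ j : Fin n, if (j, ρ j) = ((i : Fin n), σ i) then (1:ℕ) else 0) = 0 := by
    apply Finset.sum_eq_zero
    intro j _
    rw [if_neg]
    intro h
    injection h with h1 h2
    subst h1
    exact hne (congrArg Fin.val h2)
  have hr : (∑ j : Fin n, if (j, σ j) = ((i : Fin n), σ i) then (1:ℕ) else 0) = 1 := by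
    rw [Finset.sum_eq_single i] <;> simp (config := {contextual := true})
  simp only [Prod.mk.injEq] at hl hr
  omega

/-- Suppose `(τ₁, τ₂, (c_σ))` acts on monomials by
`∏ i x_{i σ(i)} ↦ c_σ ∏ i x_{τ₁(i) τ₂(σ(i))}`.  If this action fixes the immanant `P_π`
(`χ` being the class-function character associated to `π`), then
`c_{τ₂⁻¹τ₁σ} χ_π(τ₂⁻¹τ₁σ) = χ_π(σ)` for all `σ ∈ S_n`. -/
theorem stabilizing_action_coefficient_equation (n : ℕ) (χ : Equiv.Perm (Fin n) → ℂ)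
    (hχ : ∀ g h : Equiv.Perm (Fin n), χ (g * h * g⁻¹) = χ h)
    (τ₁ τ₂ : Equiv.Perm (Fin n)) (c : Equiv.Perm (Fin n) → ℂ)
    (hfix : ∑ σ : Equiv.Perm (Fin n),
          MvPolynomial.C (χ σ * c σ) *
            ∏ i, MvPolynomial.X (R := ℂ) ((τ₁ i, τ₂ (σ i)) : Fin n × Fin n)
        = ∑ σ : Equiv.Perm (Fin n),
            MvPolynomial.C (χ σ) * ∏ i, MvPolynomial.X ((i, σ i) : Fin n × Fin n)) :
    ∀ σ : Equiv.Perm (Fin n),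
      c (τ₂⁻¹ * τ₁ * σ) * χ (τ₂⁻¹ * τ₁ * σ) = χ σ := by
  classical
  -- Step 1: rewrite the LHS of hfix as a sum over ρ = τ₂ σ τ₁⁻¹
  have key : ∀ σ : Equiv.Perm (Fin n),
      χ (τ₂⁻¹ * σ * τ₁) * c (τ₂⁻¹ * σ * τ₁) = χ σ := by
    have h1 : ∑ σ : Equiv.Perm (Fin n),
          MvPolynomial.C (χ σ * c σ) *
            ∏ i, MvPolynomial.X (R := ℂ) ((τ₁ i, τ₂ (σ i)) : Fin n × Fin n)
        = ∑ ρ : Equiv.Perm (Fin n),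
            MvPolynomial.C (χ (τ₂⁻¹ * ρ * τ₁) * c (τ₂⁻¹ * ρ * τ₁)) *
              ∏ i, MvPolynomial.X (R := ℂ) ((i, ρ i) : Fin n × Fin n) := by
      apply Fintype.sum_equiv
        (Equiv.trans (Equiv.mulLeft τ₂) (Equiv.mulRight τ₁⁻¹))
      intro σ
      simp only [Equiv.trans_apply, Equiv.coe_mulLeft, Equiv.coe_mulRight]
      congr 1
      · congr 1 <;> congr 1 <;> group
      · rw [← Equiv.prod_comp τ₁ (fun j => MvPolynomial.X (R := ℂ)
          ((j, (τ₂ * σ * τ₁⁻¹) j) : Fin n × Fin n))]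
        simp [Equiv.Perm.mul_apply]
    rw [h1] at hfix
    intro σ
    have hc := congrArg (MvPolynomial.coeff (∑ i, Finsupp.single ((i, σ i) : Fin n × Fin n) 1))
      hfix
    simp only [MvPolynomial.coeff_sum, prod_X_perm_eq_monomial, MvPolynomial.coeff_C_mul,
      MvPolynomial.coeff_monomial] at hc
    rw [Finset.sum_eq_single σ, Finset.sum_eq_single σ] at hc
    · simpa using hc
    · intro ρ _ hρ
      rw [if_neg (fun h => hρ (d_inj n ρ σ h)), mul_zero]
    · simp
    · intro ρ _ hρ
      rw [if_neg (fun h => hρ (d_inj n ρ σ h)), mul_zero]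
    · simp
  intro σ
  have := key (τ₁ * σ * τ₁⁻¹)
  have hconj : τ₂⁻¹ * (τ₁ * σ * τ₁⁻¹) * τ₁ = τ₂⁻¹ * τ₁ * σ := by group
  rw [hconj, hχ τ₁ σ] at this
  linear_combination this
end
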